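/- Suppose a family of combinatorial structures satisfies: there is exactly one structure of size 0, and every structure of size n ≥ 1 decomposes uniquely as either (F1) a single arbitrary object of weight n from a base family with b_n objects of weight n, or (F2) a pair consisting of a base object of weight n_1 ≥ 1 and a structure of size n_2 ≥ 1 with n_1 + n_2 = n, together with a choice of one of k marks where k is the root-statistic of the size-n_2 structure. If the base family has generating function B(x,y) (y marking root statistic) and structures have generating function A(x,y), then A(x,y) = y·B(x,y) + y^2·B(x,y)·(A(x,y) - A(x,1))/(y-1), where the F2 structure built from a size-n_2 structure with root statistic k_2 and a base object with root statistic k_1 contributes monomials x^{n_1+n_2}·(y^{k_1+2} + ... + y^{k_1+k_2+1}). -/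

import Mathlib

open PowerSeries

private lemma coeff_fsum (f : ℕ →₀ ℚ) (m : ℕ) :
    (f.sum fun k c => Polynomial.C c * Polynomial.X ^ k).coeff m = f m := by
  rw [Finsupp.sum]
  simp only [Polynomial.finset_sum_coeff, Polynomial.coeff_C_mul, Polynomial.coeff_X_pow,
    mul_ite, mul_one, mul_zero]
  rw [Finset.sum_ite_eq f.support m (fun k => f k)]
  split
  · rfl
  · exact (Finsupp.notMem_support_iff.mp ‹_›).symm

private lemma geom_aux (k1 k2 : ℕ) :
    ((Polynomial.X : Polynomial ℚ) - 1)
        * (∑ j ∈ Finset.Icc 1 k2, (Polynomial.X : Polynomial ℚ) ^ (k1 + j + 1))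
      = Polynomial.X ^ 2 * Polynomial.X ^ k1 * (Polynomial.X ^ k2 - 1) := by
  have h : ∑ j ∈ Finset.Icc 1 k2, (Polynomial.X : Polynomial ℚ) ^ (k1 + j + 1)
      = Polynomial.X ^ (k1 + 2) * ∑ i ∈ Finset.range k2, Polynomial.X ^ i := by
    rw [Finset.mul_sum]
    rw [show Finset.Icc 1 k2 = (Finset.range k2).map
        ⟨fun i => i + 1, fun i j h => by simpa using h⟩ by
      ext x
      simp only [Finset.mem_Icc, Finset.mem_map, Finset.mem_range, Function.Embedding.coeFn_mk]
      constructor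
      · rintro ⟨h1, h2⟩; exact ⟨x - 1, by omega, show x - 1 + 1 = x by omega⟩
      · rintro ⟨i, hi, rfl⟩; exact ⟨Nat.succ_pos i, hi⟩]
    rw [Finset.sum_map]
    apply Finset.sum_congr rfl
    intro i _
    show (Polynomial.X : Polynomial ℚ) ^ (k1 + (i + 1) + 1) = Polynomial.X ^ (k1 + 2) * Polynomial.X ^ i
    simp only [Function.Embedding.coeFn_mk, ← pow_add]
    ring_nf
  rw [h, show ((Polynomial.X : Polynomial ℚ) - 1)
        * (Polynomial.X ^ (k1+2) * ∑ i ∈ Finset.range k2, Polynomial.X ^ i)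
      = Polynomial.X ^ (k1+2)
        * ((∑ i ∈ Finset.range k2, Polynomial.X ^ i) * (Polynomial.X - 1)) by ring, geom_sum_mul]
  ring

private lemma coeff_geom_aux (k1 k2 k : ℕ) :
    (∑ j ∈ Finset.Icc 1 k2, (Polynomial.X : Polynomial ℚ) ^ (k1 + j + 1)).coeff k
      = if k1 + 2 ≤ k ∧ k ≤ k1 + k2 + 1 then 1 else 0 := by
  rw [Polynomial.finset_sum_coeff]
  simp only [Polynomial.coeff_X_pow]
  by_cases h : k1 + 2 ≤ k ∧ k ≤ k1 + k2 + 1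
  · rw [if_pos h, Finset.sum_eq_single (k - k1 - 1)]
    · rw [if_pos (by omega)]
    · intro j hj hne; rw [if_neg]; simp only [Finset.mem_Icc] at hj; omega
    · intro hk; exfalso; simp only [Finset.mem_Icc] at hk; omega
  · rw [if_neg h, Finset.sum_eq_zero]
    intro j hj; rw [if_neg]; simp only [Finset.mem_Icc] at hj; omega

private lemma term_lemma (c1 c2 : ℚ) (k1 k2 : ℕ) :
    ((Polynomial.X : Polynomial ℚ) - 1)
        * (Polynomial.C (c1 * c2) * ∑ j ∈ Finset.Icc 1 k2, (Polynomial.X : Polynomial ℚ) ^ (k1 + j + 1))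
      = Polynomial.X ^ 2
        * ((Polynomial.C c1 * Polynomial.X ^ k1) * (Polynomial.C c2 * (Polynomial.X ^ k2 - 1))) := by
  rw [mul_left_comm, geom_aux, map_mul]
  ring

private lemma sub_C_eval (f : ℕ →₀ ℚ) :
    (f.sum fun k c => Polynomial.C c * Polynomial.X ^ k)
        - Polynomial.C ((f.sum fun k c => Polynomial.C c * Polynomial.X ^ k).eval 1)
      = ∑ k ∈ f.support, Polynomial.C (f k) * ((Polynomial.X : Polynomial ℚ) ^ k - 1) := by
  rw [Finsupp.sum]
  rw [Polynomial.eval_finset_sum]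
  simp only [Polynomial.eval_mul, Polynomial.eval_C, Polynomial.eval_pow, Polynomial.eval_X,
    one_pow, mul_one]
  rw [map_sum, ← Finset.sum_sub_distrib]
  apply Finset.sum_congr rfl
  intro k _
  ring

theorem functional_equation_from_structure
    (a b : ℕ → (ℕ →₀ ℚ))
    (A B : PowerSeries (Polynomial ℚ))
    (hA : ∀ n, PowerSeries.coeff n A
        = (a n).sum fun k c => Polynomial.C c * Polynomial.X ^ k)
    (hB : ∀ n, PowerSeries.coeff n B
        = (b n).sum fun k c => Polynomial.C c * Polynomial.X ^ k)
    (ha0 : a 0 = 0) (hb0 : b 0 = 0)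
    (hrec : ∀ n, 1 ≤ n → ∀ k,
      a n k = (if k = 0 then 0 else b n (k - 1))
        + ∑ p ∈ (Finset.HasAntidiagonal.antidiagonal n).filter (fun p => 1 ≤ p.1 ∧ 1 ≤ p.2),
            (b p.1).sum fun k₁ c₁ => (a p.2).sum fun k₂ c₂ =>
              c₁ * c₂ * (if k₁ + 2 ≤ k ∧ k ≤ k₁ + k₂ + 1 then 1 else 0)) :
    -- the variable y and the specialization A(x,1)
    ∀ (Y : PowerSeries (Polynomial ℚ)), Y = PowerSeries.C Polynomial.X →
    ∀ (A1 : PowerSeries (Polynomial ℚ)),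
      A1 = PowerSeries.map ((Polynomial.C : ℚ →+* Polynomial ℚ).comp
              (Polynomial.evalRingHom (1 : ℚ))) A →
    (Y - 1) * A = (Y - 1) * Y * B + Y ^ 2 * B * (A - A1) := by
  intro Y hY A1 hA1
  subst hY hA1
  set P : ℕ → Polynomial ℚ := fun n => (a n).sum fun k c => Polynomial.C c * Polynomial.X ^ k
    with hPdef
  set Q : ℕ → Polynomial ℚ := fun n => (b n).sum fun k c => Polynomial.C c * Polynomial.X ^ k
    with hQdef
  have P0 : P 0 = 0 := by simp [hPdef, ha0]
  have Q0 : Q 0 = 0 := by simp [hQdef, hb0]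
  have key : ∀ n, ((Polynomial.X : Polynomial ℚ) - 1) * P n
      = (Polynomial.X - 1) * Polynomial.X * Q n
      + Polynomial.X ^ 2 * ∑ p ∈ Finset.HasAntidiagonal.antidiagonal n,
          Q p.1 * (P p.2 - Polynomial.C ((P p.2).eval 1)) := by
    intro n
    rcases Nat.eq_zero_or_pos n with rfl | hn
    · rw [P0, Q0, Finset.Nat.antidiagonal_zero]
      simp [Q0]
    -- restrict the sum to the filtered set
    have hfilter : ∑ p ∈ Finset.HasAntidiagonal.antidiagonal n, Q p.1 * (P p.2 - Polynomial.C ((P p.2).eval 1))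
        = ∑ p ∈ (Finset.HasAntidiagonal.antidiagonal n).filter (fun p => 1 ≤ p.1 ∧ 1 ≤ p.2),
            Q p.1 * (P p.2 - Polynomial.C ((P p.2).eval 1)) := by
      rw [Finset.sum_filter_of_ne]
      intro p _ hne
      by_contra hc
      apply hne
      rcases (by omega : p.1 = 0 ∨ p.2 = 0) with h | h
      · rw [h, Q0, zero_mul]
      · rw [h, P0]; simp
    -- the difference P n - X * Q n, coefficientwise
    have hD : P n - Polynomial.X * Q n
        = ∑ p ∈ (Finset.HasAntidiagonal.antidiagonal n).filter (fun p => 1 ≤ p.1 ∧ 1 ≤ p.2),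
            (b p.1).sum fun k₁ c₁ => (a p.2).sum fun k₂ c₂ =>
              Polynomial.C (c₁ * c₂)
                * ∑ j ∈ Finset.Icc 1 k₂, (Polynomial.X : Polynomial ℚ) ^ (k₁ + j + 1) := by
      apply Polynomial.ext
      intro k
      have hrhs : (∑ p ∈ (Finset.HasAntidiagonal.antidiagonal n).filter (fun p => 1 ≤ p.1 ∧ 1 ≤ p.2),
            (b p.1).sum fun k₁ c₁ => (a p.2).sum fun k₂ c₂ =>
              Polynomial.C (c₁ * c₂)
                * ∑ j ∈ Finset.Icc 1 k₂, (Polynomial.X : Polynomial ℚ) ^ (k₁ + j + 1)).coeff k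
          = ∑ p ∈ (Finset.HasAntidiagonal.antidiagonal n).filter (fun p => 1 ≤ p.1 ∧ 1 ≤ p.2),
            (b p.1).sum fun k₁ c₁ => (a p.2).sum fun k₂ c₂ =>
              c₁ * c₂ * (if k₁ + 2 ≤ k ∧ k ≤ k₁ + k₂ + 1 then 1 else 0) := by
        simp only [Finsupp.sum, Polynomial.finset_sum_coeff, Polynomial.coeff_C_mul]
        refine Finset.sum_congr rfl fun p _ => Finset.sum_congr rfl fun k₁ _ =>
          Finset.sum_congr rfl fun k₂ _ => ?_
        rw [← Polynomial.finset_sum_coeff, coeff_geom_aux]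
      rw [Polynomial.coeff_sub, hrhs, hPdef, hQdef, coeff_fsum]
      cases k with
      | zero =>
          rw [Polynomial.mul_coeff_zero, Polynomial.coeff_X_zero, zero_mul, sub_zero]
          rw [hrec n hn 0]
          simp
      | succ k =>
          rw [Polynomial.coeff_X_mul, coeff_fsum, hrec n hn (k + 1)]
          simp
    -- multiply through by (X - 1)
    have step : ((Polynomial.X : Polynomial ℚ) - 1) * (P n - Polynomial.X * Q n)
        = Polynomial.X ^ 2 * ∑ p ∈ (Finset.HasAntidiagonal.antidiagonal n).filter (fun p => 1 ≤ p.1 ∧ 1 ≤ p.2),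
            Q p.1 * (P p.2 - Polynomial.C ((P p.2).eval 1)) := by
      rw [hD, Finset.mul_sum, Finset.mul_sum]
      apply Finset.sum_congr rfl
      intro p _
      have hsub : P p.2 - Polynomial.C ((P p.2).eval 1)
          = ∑ k₂ ∈ (a p.2).support,
              Polynomial.C ((a p.2) k₂) * ((Polynomial.X : Polynomial ℚ) ^ k₂ - 1) := by
        rw [hPdef]; exact sub_C_eval (a p.2)
      rw [hsub]
      have L : ((Polynomial.X : Polynomial ℚ) - 1)
          * (∑ k₁ ∈ (b p.1).support, ∑ k₂ ∈ (a p.2).support,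
              Polynomial.C ((b p.1) k₁ * (a p.2) k₂)
                * ∑ j ∈ Finset.Icc 1 k₂, (Polynomial.X : Polynomial ℚ) ^ (k₁ + j + 1))
          = ∑ k₁ ∈ (b p.1).support, ∑ k₂ ∈ (a p.2).support,
              Polynomial.X ^ 2 * ((Polynomial.C ((b p.1) k₁) * Polynomial.X ^ k₁)
                * (Polynomial.C ((a p.2) k₂) * (Polynomial.X ^ k₂ - 1))) := by
        rw [Finset.mul_sum]
        refine Finset.sum_congr rfl fun k₁ _ => ?_
        rw [Finset.mul_sum]
        exact Finset.sum_congr rfl fun k₂ _ => term_lemma _ _ _ _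
      have R : (Polynomial.X : Polynomial ℚ) ^ 2
          * ((∑ k₁ ∈ (b p.1).support, Polynomial.C ((b p.1) k₁) * Polynomial.X ^ k₁)
            * (∑ k₂ ∈ (a p.2).support,
                Polynomial.C ((a p.2) k₂) * ((Polynomial.X : Polynomial ℚ) ^ k₂ - 1)))
          = ∑ k₁ ∈ (b p.1).support, ∑ k₂ ∈ (a p.2).support,
              Polynomial.X ^ 2 * ((Polynomial.C ((b p.1) k₁) * Polynomial.X ^ k₁)
                * (Polynomial.C ((a p.2) k₂) * (Polynomial.X ^ k₂ - 1))) := by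
        rw [Finset.sum_mul_sum, Finset.mul_sum]
        exact Finset.sum_congr rfl fun k₁ _ => Finset.mul_sum _ _ _
      simp only [hQdef, Finsupp.sum]
      exact L.trans R.symm
    rw [hfilter, ← step]
    ring
  -- now conclude at the power-series level
  rw [show (PowerSeries.C Polynomial.X - 1 : PowerSeries (Polynomial ℚ))
      = PowerSeries.C (Polynomial.X - 1) by rw [map_sub, map_one]]
  rw [← map_mul, ← map_pow, mul_assoc]
  refine PowerSeries.ext fun n => ?_
  rw [map_add, PowerSeries.coeff_C_mul, PowerSeries.coeff_C_mul, PowerSeries.coeff_C_mul,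
    PowerSeries.coeff_mul]
  simp only [map_sub, PowerSeries.coeff_map, hA, hB, RingHom.coe_comp, Function.comp_apply,
    Polynomial.coe_evalRingHom]
  exact key n
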